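/- Let D ≥ 1, M ≥ 3, u' ∈ ℝ^D and θ' > 0, and let f(ξ) = Σ_{|α| ≤ M} f_α 𝓗_{θ',α}(v') with v' = (ξ − u')/√θ'. Assume f_{e_i} = 0 for all i = 1,…,D (so that the mean velocity of f equals u'). Then for each j ∈ {1,…,D}, the heat flux q_j := (1/2) ∫_{ℝ^D} |ξ − u'|² (ξ_j − u'_j) f(ξ) dξ satisfies q_j = 2 f_{3e_j} + Σ_{d=1}^D f_{e_j + 2e_d}. -/

import Mathlib

open MeasureTheory

/-- The probabilists' Hermite polynomial `He n`, evaluated at a real number. -/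
noncomputable def He (n : ℕ) (x : ℝ) : ℝ :=
  Polynomial.aeval x (Polynomial.hermite n)

/-- The basis function `𝓗_{θ,α}(v) = ∏_d (2π)^(-1/2) θ^(-(α_d+1)/2) He_{α_d}(v_d) e^(-v_d²/2)`. -/
noncomputable def Hb {D : ℕ} (θ : ℝ) (α : Fin D → ℕ) (v : Fin D → ℝ) : ℝ :=
  ∏ d, ((Real.sqrt (2 * Real.pi))⁻¹ * θ ^ (-(((α d : ℝ) + 1) / 2)) * He (α d) (v d) *
    Real.exp (-(v d) ^ 2 / 2))


/-- The finite set of multi-indices `α : Fin D → ℕ` with `|α| ≤ M`. -/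
noncomputable def multiIndices (D M : ℕ) : Finset (Fin D → ℕ) :=
  ((Finset.univ : Finset (Fin D → Fin (M + 1))).image (fun a => fun d => (a d : ℕ))).filter
    (fun α => (∑ d, α d) ≤ M)

/-- The normalization constant `C_{θ,α} = (2π)^{D/2} θ^{D+|α|} / (α₁!⋯α_D!)`. -/
noncomputable def Cc (D : ℕ) (θ : ℝ) (α : Fin D → ℕ) : ℝ :=
  (2 * Real.pi) ^ ((D : ℝ) / 2) * θ ^ (D + ∑ d, α d) / ∏ d, (Nat.factorial (α d) : ℝ)

namespace S13

open Polynomial Real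

lemma derivative_hermite (n : ℕ) :
    derivative (hermite (n + 1)) = ((n : ℤ[X]) + 1) * hermite n := by
  induction n with
  | zero => simp [hermite_one, hermite_zero]
  | succ n ih =>
    rw [hermite_succ (n+1), derivative_sub, derivative_mul, derivative_X, ih, hermite_succ n,
      derivative_mul]
    simp only [derivative_add, derivative_one, derivative_natCast, zero_add, add_zero]
    push_cast
    ring

lemma He_zero (x : ℝ) : He 0 x = 1 := by simp [He, hermite_zero]

lemma He_one (x : ℝ) : He 1 x = x := by simp [He, hermite_one]

lemma mul_He (n : ℕ) (x : ℝ) :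
    x * He (n + 1) x = He (n + 2) x + ((n : ℝ) + 1) * He n x := by
  have h : (hermite (n + 2)) = X * hermite (n+1) - derivative (hermite (n+1)) := hermite_succ (n+1)
  have := congrArg (fun p => (Polynomial.aeval x) p) h
  simp only [map_sub, map_mul, aeval_X, derivative_hermite, map_add, map_natCast, map_one] at this
  unfold He
  push_cast at this ⊢
  linarith [this]

lemma hasDerivAt_He_gauss (n : ℕ) (x : ℝ) :
    HasDerivAt (fun y => -(He n y * Real.exp (-y ^ 2 / 2)))
      (He (n + 1) x * Real.exp (-x ^ 2 / 2)) x := by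
  have h1 : HasDerivAt (fun y => He n y) ((Polynomial.aeval x) (derivative (hermite n))) x := by
    simpa [He] using (Polynomial.hasDerivAt_aeval (q := hermite n) x)
  have h2 : HasDerivAt (fun y : ℝ => Real.exp (-y ^ 2 / 2)) (-x * Real.exp (-x ^ 2 / 2)) x := by
    have hu : HasDerivAt (fun y : ℝ => -y ^ 2 / 2) (-x) x := by
      convert (((hasDerivAt_pow 2 x)).neg.div_const 2) using 1
      any_goals rfl
      ring
    simpa [mul_comm] using hu.exp
  have h3 := (h1.mul h2).neg
  convert h3 using 1
  any_goals rfl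
  have : He (n+1) x = x * He n x - (Polynomial.aeval x) (derivative (hermite n)) := by
    simp [He, hermite_succ n, map_sub, map_mul]
  rw [this]
  ring


lemma integrable_pow_gauss (k : ℕ) :
    Integrable fun x : ℝ => x ^ k * Real.exp (-x ^ 2 / 2) := by
  have h := integrable_rpow_mul_exp_neg_mul_sq (b := (1:ℝ)/2) (by norm_num)
    (s := (k : ℝ)) (lt_of_lt_of_le (by norm_num) (Nat.cast_nonneg k))
  have : (fun x : ℝ => x ^ (k:ℝ) * Real.exp (-(1/2) * x ^ 2))
      = fun x : ℝ => x ^ k * Real.exp (-x ^ 2 / 2) := by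
    funext x
    rw [Real.rpow_natCast]
    ring_nf
  rwa [this] at h

lemma integrable_polyGauss (p : ℝ[X]) :
    Integrable fun x : ℝ => p.eval x * Real.exp (-x ^ 2 / 2) := by
  have : (fun x : ℝ => p.eval x * Real.exp (-x ^ 2 / 2))
      = fun x : ℝ => ∑ i ∈ Finset.range (p.natDegree + 1),
          p.coeff i * (x ^ i * Real.exp (-x ^ 2 / 2)) := by
    funext x
    rw [eval_eq_sum_range, Finset.sum_mul]
    simp [mul_assoc]
  rw [this]
  exact integrable_finset_sum _ (fun i _ => (integrable_pow_gauss i).const_mul _)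

lemma He_eq_eval (n : ℕ) (x : ℝ) :
    He n x = ((hermite n).map (algebraMap ℤ ℝ)).eval x := by
  simp [He, Polynomial.eval_map, Polynomial.aeval_def]

lemma integrable_pow_He_gauss (k n : ℕ) :
    Integrable fun x : ℝ => x ^ k * He n x * Real.exp (-x ^ 2 / 2) := by
  have h := integrable_polyGauss (X ^ k * (hermite n).map (algebraMap ℤ ℝ))
  have : (fun x : ℝ => (X ^ k * (hermite n).map (algebraMap ℤ ℝ)).eval x * Real.exp (-x ^ 2 / 2))
      = fun x : ℝ => x ^ k * He n x * Real.exp (-x ^ 2 / 2) := by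
    funext x
    rw [eval_mul, eval_pow, eval_X, He_eq_eval]
  rwa [this] at h

lemma integrable_He_gauss (n : ℕ) :
    Integrable fun x : ℝ => He n x * Real.exp (-x ^ 2 / 2) := by
  have := integrable_pow_He_gauss 0 n
  simpa using this

/-- `K k n = ∫ x^k He_n(x) e^{-x²/2}`. -/
noncomputable def K (k n : ℕ) : ℝ := ∫ x : ℝ, x ^ k * He n x * Real.exp (-x ^ 2 / 2)

lemma gauss_integral : ∫ x : ℝ, Real.exp (-x ^ 2 / 2) = Real.sqrt (2 * π) := by
  have h := integral_gaussian (1/2)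
  have : (fun x : ℝ => Real.exp (-(1/2) * x ^ 2)) = fun x : ℝ => Real.exp (-x ^ 2 / 2) := by
    funext x; ring_nf
  rw [this] at h
  rw [show π / (1/2) = 2 * π by ring] at h
  exact h

lemma K_zero (n : ℕ) : K 0 n = if n = 0 then Real.sqrt (2 * π) else 0 := by
  cases n with
  | zero =>
    simp only [K, pow_zero, one_mul, He_zero, if_pos rfl]
    exact gauss_integral
  | succ n =>
    simp only [K, pow_zero, one_mul, Nat.succ_ne_zero, if_false]
    exact integral_eq_zero_of_hasDerivAt_of_integrable
      (fun x => hasDerivAt_He_gauss n x)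
      (integrable_He_gauss (n+1)) ((integrable_He_gauss n).neg)

lemma K_succ_zero (k : ℕ) : K (k+1) 0 = K k 1 := by
  unfold K
  congr 1
  funext x
  have : x * He 0 x = He 1 x := by rw [He_zero, He_one]; ring
  calc x ^ (k+1) * He 0 x * Real.exp (-x^2/2)
      = x ^ k * (x * He 0 x) * Real.exp (-x^2/2) := by ring
    _ = x ^ k * He 1 x * Real.exp (-x^2/2) := by rw [this]

lemma K_succ_succ (k n : ℕ) :
    K (k+1) (n+1) = K k (n+2) + ((n:ℝ)+1) * K k n := by
  unfold K
  have hpt : (fun x : ℝ => x ^ (k+1) * He (n+1) x * Real.exp (-x^2/2))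
      = fun x : ℝ => x ^ k * He (n+2) x * Real.exp (-x^2/2)
          + ((n:ℝ)+1) * (x ^ k * He n x * Real.exp (-x^2/2)) := by
    funext x
    have h := mul_He n x
    calc x ^ (k+1) * He (n+1) x * Real.exp (-x^2/2)
        = x ^ k * (x * He (n+1) x) * Real.exp (-x^2/2) := by ring
      _ = x ^ k * (He (n+2) x + ((n:ℝ)+1) * He n x) * Real.exp (-x^2/2) := by rw [h]
      _ = _ := by ring
  rw [hpt, integral_add (integrable_pow_He_gauss k (n+2))
    ((integrable_pow_He_gauss k n).const_mul _), integral_const_mul]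

lemma K_one (n : ℕ) : K 1 n = if n = 1 then Real.sqrt (2 * π) else 0 := by
  match n with
  | 0 => rw [K_succ_zero, K_zero]; simp
  | (n+1) => rw [K_succ_succ, K_zero, K_zero]; rcases n with _|n <;> simp
lemma K_two (n : ℕ) :
    K 2 n = if n = 0 then Real.sqrt (2*π) else if n = 2 then 2 * Real.sqrt (2*π) else 0 := by
  match n with
  | 0 => rw [K_succ_zero, K_one]; simp
  | 1 => rw [K_succ_succ, K_one, K_one]; norm_num
  | 2 => rw [K_succ_succ, K_one, K_one]; norm_num
  | (n+3) =>
    rw [K_succ_succ, K_one, K_one, if_neg (by omega), if_neg (by omega),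
      if_neg (by omega), if_neg (by omega)]
    ring
lemma K_three (n : ℕ) :
    K 3 n = if n = 1 then 3 * Real.sqrt (2*π) else if n = 3 then 6 * Real.sqrt (2*π) else 0 := by
  match n with
  | 0 => rw [K_succ_zero, K_two]; simp
  | 1 => rw [K_succ_succ, K_two, K_two]; norm_num; ring
  | 2 => rw [K_succ_succ, K_two, K_two]; norm_num
  | 3 => rw [K_succ_succ, K_two, K_two]; norm_num; ring
  | (n+4) =>
    rw [K_succ_succ, K_two, K_two, if_neg (by omega), if_neg (by omega),
      if_neg (by omega), if_neg (by omega), if_neg (by omega), if_neg (by omega)]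
    ring

/-- normalized moments -/
noncomputable def J (k n : ℕ) : ℝ := (Real.sqrt (2 * π))⁻¹ * K k n

lemma sqrt2pi_pos : 0 < Real.sqrt (2 * π) := Real.sqrt_pos.mpr (by positivity)

lemma J_zero (n : ℕ) : J 0 n = if n = 0 then 1 else 0 := by
  rw [J, K_zero]; split_ifs <;> field_simp <;> simp

lemma J_one (n : ℕ) : J 1 n = if n = 1 then 1 else 0 := by
  rw [J, K_one]; split_ifs <;> field_simp <;> simp

lemma J_two (n : ℕ) : J 2 n = if n = 0 then 1 else if n = 2 then 2 else 0 := by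
  rw [J, K_two]; split_ifs <;> field_simp <;> ring

lemma J_three (n : ℕ) : J 3 n = if n = 1 then 3 else if n = 3 then 6 else 0 := by
  rw [J, K_three]; split_ifs <;> field_simp <;> ring

/-- the 1D basis factor -/
noncomputable def bd (θ u : ℝ) (n : ℕ) (x : ℝ) : ℝ :=
  (Real.sqrt (2 * Real.pi))⁻¹ * θ ^ (-(((n : ℝ) + 1) / 2)) * He n ((x - u) / Real.sqrt θ) *
    Real.exp (-((x - u) / Real.sqrt θ) ^ 2 / 2)

lemma bd_eq_comp (θ u : ℝ) (hθ : 0 < θ) (n k : ℕ) :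
    (fun x : ℝ => (x - u) ^ k * bd θ u n x)
      = (fun y : ℝ => ((Real.sqrt θ) ^ k * ((Real.sqrt (2 * Real.pi))⁻¹ *
          θ ^ (-(((n : ℝ) + 1) / 2)))) * (y ^ k * He n y * Real.exp (-y ^ 2 / 2)))
        ∘ (fun x : ℝ => (x - u) / Real.sqrt θ) := by
  have hs : Real.sqrt θ ≠ 0 := ne_of_gt (Real.sqrt_pos.mpr hθ)
  funext x
  have hx : Real.sqrt θ * ((x - u) / Real.sqrt θ) = x - u := by field_simp
  simp only [Function.comp_apply, bd]
  rw [show (x - u) ^ k = (Real.sqrt θ * ((x - u) / Real.sqrt θ)) ^ k by rw [hx], mul_pow]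
  ring

lemma integrable_bd (θ u : ℝ) (hθ : 0 < θ) (n k : ℕ) :
    Integrable fun x : ℝ => (x - u) ^ k * bd θ u n x := by
  have hs : Real.sqrt θ ≠ 0 := ne_of_gt (Real.sqrt_pos.mpr hθ)
  rw [bd_eq_comp θ u hθ n k]
  exact (((integrable_pow_He_gauss k n).const_mul _).comp_div hs).comp_sub_right u

lemma pow_collect (θ : ℝ) (hθ : 0 < θ) (k n : ℕ) :
    Real.sqrt θ * ((Real.sqrt θ) ^ k * θ ^ (-(((n : ℝ) + 1) / 2)))
      = θ ^ (((k : ℝ) - n) / 2) := by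
  rw [Real.sqrt_eq_rpow, ← Real.rpow_natCast (θ ^ ((1:ℝ)/2)) k, ← Real.rpow_mul hθ.le,
    ← Real.rpow_add hθ, ← Real.rpow_add hθ]
  congr 1
  ring

lemma oneD (θ u : ℝ) (hθ : 0 < θ) (k n : ℕ) :
    (∫ x : ℝ, (x - u) ^ k * bd θ u n x) = θ ^ (((k : ℝ) - n) / 2) * J k n := by
  have hs0 : 0 < Real.sqrt θ := Real.sqrt_pos.mpr hθ
  rw [bd_eq_comp θ u hθ n k]
  set g : ℝ → ℝ := fun y : ℝ => ((Real.sqrt θ) ^ k * ((Real.sqrt (2 * Real.pi))⁻¹ *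
      θ ^ (-(((n : ℝ) + 1) / 2)))) * (y ^ k * He n y * Real.exp (-y ^ 2 / 2)) with hg
  have h1 : (∫ x : ℝ, (g ∘ fun x => (x - u) / Real.sqrt θ) x)
      = ∫ x : ℝ, (fun x => g (x / Real.sqrt θ)) (x - u) := by rfl
  rw [h1, integral_sub_right_eq_self (fun x => g (x / Real.sqrt θ)) u,
    MeasureTheory.Measure.integral_comp_div g (Real.sqrt θ)]
  rw [hg, integral_const_mul, smul_eq_mul, abs_of_pos hs0]
  rw [show (∫ x : ℝ, x ^ k * He n x * Real.exp (-x ^ 2 / 2)) = K k n from rfl]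
  rw [J, ← pow_collect θ hθ k n]
  ring

lemma J_ne_zero_0 {n : ℕ} (h : J 0 n ≠ 0) : n = 0 := by
  by_contra hn; rw [J_zero, if_neg hn] at h; exact h rfl
lemma J_ne_zero_1 {n : ℕ} (h : J 1 n ≠ 0) : n = 1 := by
  by_contra hn; rw [J_one, if_neg hn] at h; exact h rfl
lemma J_ne_zero_2 {n : ℕ} (h : J 2 n ≠ 0) : n = 0 ∨ n = 2 := by
  by_contra hn; push_neg at hn
  rw [J_two, if_neg hn.1, if_neg hn.2] at h; exact h rfl
lemma J_ne_zero_3 {n : ℕ} (h : J 3 n ≠ 0) : n = 1 ∨ n = 3 := by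
  by_contra hn; push_neg at hn
  rw [J_three, if_neg hn.1, if_neg hn.2] at h; exact h rfl

lemma prod_one_pt {D : ℕ} (g : Fin D → ℝ) (i : Fin D) (h : ∀ d, d ≠ i → g d = 1) :
    ∏ d, g d = g i :=
  Finset.prod_eq_single_of_mem i (Finset.mem_univ i) (fun b _ hb => h b hb)

lemma prod_two_pt {D : ℕ} (g : Fin D → ℝ) (i j : Fin D) (hij : i ≠ j)
    (h : ∀ d, d ≠ i → d ≠ j → g d = 1) : ∏ d, g d = g i * g j := by
  classical
  rw [← Finset.prod_subset (Finset.subset_univ ({i, j} : Finset (Fin D)))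
    (fun x _ hx => h x (fun hxi => hx (by simp [hxi])) (fun hxj => hx (by simp [hxj])))]
  exact Finset.prod_pair hij

/-- the key product evaluation -/
lemma T_eval {D : ℕ} (θ : ℝ) (hθ : 0 < θ) (i j : Fin D) (α : Fin D → ℕ) :
    (∏ d, θ ^ (((((if d = j then 1 else 0) + (if d = i then 2 else 0) : ℕ) : ℝ) - (α d : ℝ)) / 2)
        * J ((if d = j then 1 else 0) + (if d = i then 2 else 0)) (α d))
    = if α = (fun k => (if k = j then 1 else 0) + (if k = i then 2 else 0)) then
        (if i = j then 6 else 2)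
      else if α = (fun k => if k = j then 1 else 0) then (if i = j then 3 * θ else θ) else 0 := by
  classical
  by_cases hA : α = (fun k => (if k = j then 1 else 0) + (if k = i then 2 else 0))
  · rw [if_pos hA, hA]
    by_cases hij : i = j
    · subst hij
      rw [if_pos rfl]
      rw [prod_one_pt _ i (fun d hd => by simp [hd, J_zero])]
      norm_num [J_three]
    · have hji : j ≠ i := fun h => hij h.symm
      rw [if_neg hij]
      rw [prod_two_pt _ i j (fun h => hij h) (fun d hdi hdj => by simp [hdi, hdj, J_zero])]
      norm_num [hij, hji, J_two, J_one]
  · rw [if_neg hA]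
    by_cases hE : α = (fun k => if k = j then 1 else 0)
    · rw [if_pos hE, hE]
      by_cases hij : i = j
      · subst hij
        rw [if_pos rfl]
        rw [prod_one_pt _ i (fun d hd => by simp [hd, J_zero])]
        norm_num [J_three, Real.rpow_one]
        ring
      · have hji : j ≠ i := fun h => hij h.symm
        rw [if_neg hij]
        rw [prod_two_pt _ i j (fun h => hij h) (fun d hdi hdj => by simp [hdi, hdj, J_zero])]
        norm_num [hij, hji, J_two, J_one, Real.rpow_one]
    · rw [if_neg hE]
      by_contra hne
      have hz : ∀ d, J ((if d = j then 1 else 0) + (if d = i then 2 else 0)) (α d) ≠ 0 := by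
        intro d hd
        exact hne (Finset.prod_eq_zero (Finset.mem_univ d) (by rw [hd, mul_zero]))
      have hout : ∀ d, d ≠ i → d ≠ j → α d = 0 := by
        intro d hdi hdj
        have := hz d
        rw [if_neg hdj, if_neg hdi] at this
        exact J_ne_zero_0 this
      by_cases hij : i = j
      · subst hij
        have hj := hz i
        rw [if_pos rfl, if_pos rfl] at hj
        rcases J_ne_zero_3 hj with h1 | h3
        · exact hE (funext fun d => by
            by_cases hd : d = i
            · subst hd; rw [if_pos rfl]; exact h1
            · rw [if_neg hd]; exact hout d hd hd)
        · exact hA (funext fun d => by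
            by_cases hd : d = i
            · subst hd; rw [if_pos rfl, if_pos rfl]; exact h3
            · rw [if_neg hd, if_neg hd]; exact hout d hd hd)
      · have hi := hz i
        rw [if_neg hij, if_pos rfl] at hi
        have hjj := hz j
        rw [if_pos rfl, if_neg (fun h => hij h.symm)] at hjj
        have hαj : α j = 1 := J_ne_zero_1 hjj
        rcases J_ne_zero_2 hi with h0 | h2
        · exact hE (funext fun d => by
            by_cases hdj : d = j
            · subst hdj; rw [if_pos rfl]; exact hαj
            · rw [if_neg hdj]
              by_cases hdi : d = i
              · subst hdi; exact h0
              · exact hout d hdi hdj)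
        · exact hA (funext fun d => by
            by_cases hdj : d = j
            · subst hdj; rw [if_pos rfl, if_neg (fun h => hij h.symm)]; exact hαj
            · rw [if_neg hdj]
              by_cases hdi : d = i
              · subst hdi; rw [if_pos rfl]; exact h2
              · rw [if_neg hdi]; exact hout d hdi hdj)

lemma sum_ite2 {D : ℕ} {S : Finset (Fin D → ℕ)} {A E : Fin D → ℕ} (hA : A ∈ S) (hE : E ∈ S)
    (hne : A ≠ E) (w v : ℝ) (c : (Fin D → ℕ) → ℝ) :
    ∑ α ∈ S, c α * (if α = A then w else if α = E then v else 0) = c A * w + c E * v := by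
  classical
  have key : ∀ α ∈ S, c α * (if α = A then w else if α = E then v else 0)
      = (if α = A then c A * w else 0) + (if α = E then c E * v else 0) := by
    intro α _
    by_cases h1 : α = A
    · subst h1; rw [if_pos rfl, if_pos rfl, if_neg hne, add_zero]
    · rw [if_neg h1, if_neg h1, zero_add]
      by_cases h2 : α = E
      · subst h2; rw [if_pos rfl, if_pos rfl]
      · rw [if_neg h2, if_neg h2, mul_zero]
  rw [Finset.sum_congr rfl key, Finset.sum_add_distrib,
    Finset.sum_ite_eq' S A (fun _ => c A * w), Finset.sum_ite_eq' S E (fun _ => c E * v),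
    if_pos hA, if_pos hE]


lemma mem_multiIndices {D M : ℕ} (α : Fin D → ℕ) (h : (∑ d, α d) ≤ M) :
    α ∈ multiIndices D M := by
  have hb : ∀ d, α d < M + 1 := fun d => Nat.lt_succ_of_le (le_trans
    (Finset.single_le_sum (f := α) (fun i _ => Nat.zero_le _) (Finset.mem_univ d)) h)
  exact Finset.mem_filter.mpr
    ⟨Finset.mem_image.mpr ⟨fun d => ⟨α d, hb d⟩, Finset.mem_univ _, rfl⟩, h⟩

end S13

open S13

/-- the heat flux of a truncated Hermite expansion around `(u',θ')` with
vanishing first-order coefficients: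
`q_j = (1/2)∫ |ξ−u'|²(ξ_j−u'_j) f dξ = 2 f_{3e_j} + Σ_d f_{e_j+2e_d}`. -/
theorem stmt13 (D M : ℕ) (hD : 1 ≤ D) (hM : 3 ≤ M)
    (u' : Fin D → ℝ) (θ' : ℝ) (hθ' : 0 < θ')
    (c : (Fin D → ℕ) → ℝ) (f : (Fin D → ℝ) → ℝ)
    (hf : f = fun ξ => ∑ α ∈ multiIndices D M,
      c α * Hb θ' α (fun d => (ξ d - u' d) / Real.sqrt θ'))
    (hmean : ∀ i : Fin D, c (fun k => if k = i then 1 else 0) = 0) :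
    ∀ j : Fin D,
      (1 / 2 : ℝ) * ∫ ξ, (∑ i, (ξ i - u' i) ^ 2) * (ξ j - u' j) * f ξ =
        2 * c (fun k => if k = j then 3 else 0) +
          ∑ d : Fin D, c (fun k => (if k = j then 1 else 0) + (if k = d then 2 else 0)) := by
  intro j
  classical
  have hHb : ∀ (α : Fin D → ℕ) (ξ : Fin D → ℝ),
      Hb θ' α (fun d => (ξ d - u' d) / Real.sqrt θ') = ∏ d, bd θ' (u' d) (α d) (ξ d) := by
    intro α ξ
    simp only [Hb, bd]
  have hint : (fun ξ : Fin D → ℝ => (∑ i, (ξ i - u' i) ^ 2) * (ξ j - u' j) * f ξ)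
      = fun ξ => ∑ α ∈ multiIndices D M, ∑ i : Fin D, c α *
          ∏ d, ((ξ d - u' d) ^ ((if d = j then 1 else 0) + (if d = i then 2 else 0))
            * bd θ' (u' d) (α d) (ξ d)) := by
    funext ξ
    simp only [hf]
    rw [Finset.mul_sum]
    refine Finset.sum_congr rfl (fun α _ => ?_)
    rw [hHb]
    rw [Finset.sum_mul, Finset.sum_mul]
    refine Finset.sum_congr rfl (fun i _ => ?_)
    rw [Finset.prod_mul_distrib]
    have hpow : ∏ d, (ξ d - u' d) ^ ((if d = j then 1 else 0) + (if d = i then 2 else 0))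
        = (ξ j - u' j) * (ξ i - u' i) ^ 2 := by
      have h1 : ∀ d, (ξ d - u' d) ^ ((if d = j then 1 else 0) + (if d = i then 2 else 0))
          = (if d = j then ξ d - u' d else 1) * (if d = i then (ξ d - u' d) ^ 2 else 1) := by
        intro d; rw [pow_add]; split_ifs <;> simp
      rw [Finset.prod_congr rfl (fun d _ => h1 d), Finset.prod_mul_distrib,
        Finset.prod_ite_eq' Finset.univ j (fun d => ξ d - u' d),
        Finset.prod_ite_eq' Finset.univ i (fun d => (ξ d - u' d) ^ 2),
        if_pos (Finset.mem_univ j), if_pos (Finset.mem_univ i)]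
    rw [hpow]
    ring
  rw [hint]
  have hI1 : ∀ (α : Fin D → ℕ) (i : Fin D), Integrable (fun ξ : Fin D → ℝ =>
      ∏ d, ((ξ d - u' d) ^ ((if d = j then 1 else 0) + (if d = i then 2 else 0))
        * bd θ' (u' d) (α d) (ξ d))) :=
    fun α i => Integrable.fintype_prod
      (f := fun d x => (x - u' d) ^ ((if d = j then 1 else 0) + (if d = i then 2 else 0))
        * bd θ' (u' d) (α d) x)
      (fun d => integrable_bd θ' (u' d) hθ' (α d) _)
  rw [integral_finset_sum _ (fun α _ =>
    integrable_finset_sum _ (fun i _ => (hI1 α i).const_mul (c α)))]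
  have hInner : ∀ α : Fin D → ℕ, (∫ ξ : Fin D → ℝ, ∑ i : Fin D, c α *
      ∏ d, ((ξ d - u' d) ^ ((if d = j then 1 else 0) + (if d = i then 2 else 0))
        * bd θ' (u' d) (α d) (ξ d)))
      = ∑ i : Fin D, c α * ∏ d,
          (θ' ^ (((((if d = j then 1 else 0) + (if d = i then 2 else 0) : ℕ) : ℝ) - (α d : ℝ)) / 2)
            * J ((if d = j then 1 else 0) + (if d = i then 2 else 0)) (α d)) := by
    intro α
    rw [integral_finset_sum _ (fun i _ => (hI1 α i).const_mul (c α))]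
    refine Finset.sum_congr rfl (fun i _ => ?_)
    rw [integral_const_mul]
    congr 1
    rw [MeasureTheory.integral_fintype_prod_volume_eq_prod (𝕜 := ℝ) (ι := Fin D)
      (fun d x => (x - u' d) ^ ((if d = j then 1 else 0) + (if d = i then 2 else 0))
        * bd θ' (u' d) (α d) x)]
    exact Finset.prod_congr rfl (fun d _ => oneD θ' (u' d) hθ' _ (α d))
  rw [Finset.sum_congr rfl (fun α _ => hInner α), Finset.sum_comm]
  have hmem_A : ∀ i : Fin D,
      (fun k => (if k = j then 1 else 0) + (if k = i then 2 else 0)) ∈ multiIndices D M := by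
    intro i
    apply mem_multiIndices
    rw [Finset.sum_add_distrib, Finset.sum_ite_eq' Finset.univ j (fun _ => 1),
      Finset.sum_ite_eq' Finset.univ i (fun _ => 2), if_pos (Finset.mem_univ j),
      if_pos (Finset.mem_univ i)]
    omega
  have hmem_E : (fun k : Fin D => if k = j then 1 else 0) ∈ multiIndices D M := by
    apply mem_multiIndices
    rw [Finset.sum_ite_eq' Finset.univ j (fun _ => 1), if_pos (Finset.mem_univ j)]
    omega
  have hAE : ∀ i : Fin D, (fun k => (if k = j then 1 else 0) + (if k = i then 2 else 0))
      ≠ (fun k : Fin D => if k = j then 1 else 0) := by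
    intro i h
    have := congrFun h i
    simp only at this
    split_ifs at this <;> omega
  have hone : ∀ i : Fin D, (∑ α ∈ multiIndices D M, c α * ∏ d,
      (θ' ^ (((((if d = j then 1 else 0) + (if d = i then 2 else 0) : ℕ) : ℝ) - (α d : ℝ)) / 2)
        * J ((if d = j then 1 else 0) + (if d = i then 2 else 0)) (α d)))
      = c (fun k => (if k = j then 1 else 0) + (if k = i then 2 else 0))
          * (if i = j then 6 else 2) := by
    intro i
    have h2 := sum_ite2 (hmem_A i) hmem_E (hAE i)
      (if i = j then (6:ℝ) else 2) (if i = j then 3 * θ' else θ') c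
    rw [Finset.sum_congr rfl (fun α _ => by rw [T_eval θ' hθ' i j α]), h2, hmean j,
      zero_mul, add_zero]
  rw [Finset.sum_congr rfl (fun i _ => hone i)]
  have hsplit : ∀ i : Fin D,
      c (fun k => (if k = j then 1 else 0) + (if k = i then 2 else 0)) * (if i = j then (6:ℝ) else 2)
      = 2 * c (fun k => (if k = j then 1 else 0) + (if k = i then 2 else 0))
        + (if i = j then 4 * c (fun k => (if k = j then 1 else 0) + (if k = i then 2 else 0)) else 0) := by
    intro i; split_ifs <;> ring
  rw [Finset.sum_congr rfl (fun i _ => hsplit i), Finset.sum_add_distrib,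
    Finset.sum_ite_eq' Finset.univ j
      (fun i => 4 * c (fun k => (if k = j then 1 else 0) + (if k = i then 2 else 0))),
    if_pos (Finset.mem_univ j)]
  have hAj : c (fun k => (if k = j then 1 else 0) + (if k = j then 2 else 0))
      = c (fun k : Fin D => if k = j then 3 else 0) := by
    congr 1
    funext k
    split_ifs <;> rfl
  rw [hAj, ← Finset.mul_sum]
  ring
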